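/- Let a be a point of P^2(\bar{F}_{q}) with F^7(a) = a and Frobenius orbit of size 7, where q is a power of 2. Then the orbit O(a) = {a, F(a), ..., F^6(a)} forms a Fano plane (7 points such that there are 7 lines each containing exactly 3 of the points and each point lying on exactly 3 of these lines) if and only if either {a, F(a), F^5(a)} are collinear or {a, F(a), F^3(a)} are collinear, but not both. -/

import Mathlib

open Projectivization
open scoped LinearAlgebra.Projectivization

variable {K : Type} [Field K]

/-- The projective plane over `K`, as the projectivization of `K^3`. -/
abbrev Pt (K : Type) [Field K] := ℙ K (Fin 3 → K)

/-- Lines in the projective plane over `K`: projectivized nonzero linear forms. -/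
abbrev Ln (K : Type) [Field K] := ℙ K ((Fin 3 → K) →ₗ[K] K)

/-- Incidence: the point lies on the line. -/
def OnLine (x : Pt K) (ℓ : Ln K) : Prop := ℓ.rep x.rep = 0

/-- Three points are collinear: some nonzero linear form vanishes on all of them. -/
def Collinear3 (a b c : Pt K) : Prop :=
  ∃ f : (Fin 3 → K) →ₗ[K] K, f ≠ 0 ∧ f a.rep = 0 ∧ f b.rep = 0 ∧ f c.rep = 0

/-- The map on the projective plane induced by `x ↦ x ^ q` on coordinates. -/
noncomputable def Frob (q : ℕ) (x : Pt K) : Pt K :=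
  if hq : q = 0 then x else
  Projectivization.mk K (fun i => x.rep i ^ q) (by
    intro h
    apply x.rep_nonzero
    funext i
    have hi := congrFun h i
    simpa using (pow_eq_zero_iff hq).mp (by simpa using hi))

/-- The algebraic closure of the field with `p ^ n` elements. -/
abbrev Kbar (p n : ℕ) [Fact p.Prime] := AlgebraicClosure (GaloisField p n)

/-- A Fano plane: 7 points together with 7 lines, with 3 of the points on each
line and 3 of the lines through each point. -/
def IsFanoPlane {K : Type} [Field K] (S : Set (Pt K)) : Prop :=
  S.ncard = 7 ∧ ∃ L : Set (Ln K), L.ncard = 7 ∧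
    (∀ ℓ ∈ L, {x ∈ S | OnLine x ℓ}.ncard = 3) ∧
    (∀ x ∈ S, {ℓ ∈ L | OnLine x ℓ}.ncard = 3)

namespace FanoAux

variable {K : Type} [Field K]

abbrev Form (K : Type) [Field K] := (Fin 3 → K) →ₗ[K] K

lemma rep_eq_unit_smul {V : Type} [AddCommGroup V] [Module K V] (v : V) (hv : v ≠ 0) :
    ∃ c : Kˣ, (Projectivization.mk K v hv).rep = c • v := by
  obtain ⟨c, hc⟩ := Projectivization.exists_smul_eq_mk_rep K v hv
  exact ⟨c, hc.symm⟩

lemma form_zero_rep_iff (f : Form K) (v : Fin 3 → K) (hv : v ≠ 0) :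
    f (Projectivization.mk K v hv).rep = 0 ↔ f v = 0 := by
  obtain ⟨c, hc⟩ := rep_eq_unit_smul (K := K) v hv
  rw [hc, Units.smul_def, map_smul, smul_eq_mul, mul_eq_zero]
  simp [Units.ne_zero c]

lemma onLine_mk (x : Pt K) (f : Form K) (hf : f ≠ 0) :
    OnLine x (Projectivization.mk K f hf : Ln K) ↔ f x.rep = 0 := by
  obtain ⟨c, hc⟩ := rep_eq_unit_smul (K := K) f hf
  unfold OnLine
  rw [hc]
  rw [Units.smul_def, LinearMap.smul_apply, smul_eq_mul, mul_eq_zero]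
  simp [Units.ne_zero c]

lemma indep_of_ne {x y : Pt K} (h : x ≠ y) : LinearIndependent K ![x.rep, y.rep] := by
  rw [LinearIndependent.pair_iff' x.rep_nonzero]
  intro c hc
  have : y = x := by
    rw [← x.mk_rep, ← y.mk_rep]
    exact (Projectivization.mk_eq_mk_iff' K _ _ y.rep_nonzero x.rep_nonzero).mpr ⟨c, hc⟩
  exact h this.symm

lemma ker_finrank {f : Form K} (hf : f ≠ 0) :
    Module.finrank K (LinearMap.ker f) = 2 := by
  have hr : LinearMap.range f = ⊤ := by
    rcases DFunLike.ne_iff.mp hf with ⟨v, hv⟩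
    apply Submodule.eq_top_of_finrank_eq
    have h1 : Module.finrank K (LinearMap.range f) ≤ 1 := by
      simpa using Submodule.finrank_le (LinearMap.range f)
    rw [Module.finrank_self]
    have h2 : 1 ≤ Module.finrank K (LinearMap.range f) := by
      have : f v ∈ LinearMap.range f := ⟨v, rfl⟩
      have hnt : LinearMap.range f ≠ ⊥ := by
        intro hbot
        rw [hbot] at this
        simp only [Submodule.mem_bot] at this
        exact hv (by simpa using this)
      exact Submodule.one_le_finrank_iff.mpr hnt
    omega
  have h3 := LinearMap.finrank_range_add_finrank_ker f
  rw [hr, finrank_top, Module.finrank_self, Module.finrank_fintype_fun_eq_card] at h3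
  simp only [Fintype.card_fin] at h3
  omega
lemma ker_eq_span {f : Form K} (hf : f ≠ 0) {u v : Fin 3 → K}
    (hind : LinearIndependent K ![u, v]) (hu : f u = 0) (hv : f v = 0) :
    LinearMap.ker f = Submodule.span K {u, v} := by
  have hle : Submodule.span K {u, v} ≤ LinearMap.ker f := by
    rw [Submodule.span_le]
    rintro w (rfl | rfl) <;> simpa [LinearMap.mem_ker]
  have hrange : Set.range ![u, v] = {u, v} := by
    ext w
    simp [Matrix.range_cons, Matrix.range_empty]
    tauto
  have hfr : Module.finrank K (Submodule.span K ({u, v} : Set (Fin 3 → K))) = 2 := by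
    rw [← hrange, finrank_span_eq_card hind]
    simp
  symm
  apply Submodule.eq_of_le_of_finrank_le hle
  rw [hfr, ker_finrank hf]

lemma vanish_of_two {x y : Pt K} (hxy : x ≠ y) {f g : Form K}
    (hf : f ≠ 0) (hfx : f x.rep = 0) (hfy : f y.rep = 0)
    (hgx : g x.rep = 0) (hgy : g y.rep = 0) {w : Fin 3 → K} (hw : f w = 0) : g w = 0 := by
  have hker := ker_eq_span hf (indep_of_ne hxy) hfx hfy
  have hwmem : w ∈ Submodule.span K ({x.rep, y.rep} : Set (Fin 3 → K)) := by
    rw [← hker]; exact hw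
  have hle : Submodule.span K ({x.rep, y.rep} : Set (Fin 3 → K)) ≤ LinearMap.ker g := by
    rw [Submodule.span_le]
    rintro u (rfl | rfl) <;> simpa [LinearMap.mem_ker]
  exact hle hwmem

/-- two distinct points determine the line: two nonzero forms vanishing on two
distinct points are proportional. -/
lemma forms_eq {x y : Pt K} (hxy : x ≠ y) {f g : Form K}
    (hf : f ≠ 0) (hg : g ≠ 0) (hfx : f x.rep = 0) (hfy : f y.rep = 0)
    (hgx : g x.rep = 0) (hgy : g y.rep = 0) : ∃ c : Kˣ, f = c • g := by
  obtain ⟨w, hw⟩ := DFunLike.ne_iff.mp hg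
  simp only [LinearMap.zero_apply] at hw
  set c : K := f w / g w with hc
  have hker : LinearMap.ker f = LinearMap.ker g := by
    rw [ker_eq_span hf (indep_of_ne hxy) hfx hfy,
      ker_eq_span hg (indep_of_ne hxy) hgx hgy]
  have hsub : f - c • g = 0 := by
    by_contra hne
    have h1 : LinearMap.ker g ≤ LinearMap.ker (f - c • g) := by
      intro u hu
      have hgu : g u = 0 := hu
      have hfu : f u = 0 := by
        have : u ∈ LinearMap.ker f := hker ▸ hu
        exact this
      simp [LinearMap.mem_ker, hfu, hgu]
    have h2 : LinearMap.ker g = LinearMap.ker (f - c • g) := by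
      apply Submodule.eq_of_le_of_finrank_le h1
      rw [ker_finrank hne, ker_finrank hg]
    have hwk : w ∈ LinearMap.ker (f - c • g) := by
      simp [LinearMap.mem_ker, hc, div_mul_cancel₀ _ hw]
    rw [← h2] at hwk
    exact hw hwk
    done
  have hcne : c ≠ 0 := by
    intro h0
    rw [h0, zero_smul, sub_zero] at hsub
    exact hf hsub
  refine ⟨Units.mk0 c hcne, ?_⟩
  have := sub_eq_zero.mp hsub
  simpa [Units.smul_def] using this

lemma line_eq_of_two {x y : Pt K} (hxy : x ≠ y) {ℓ ℓ' : Ln K}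
    (h1 : OnLine x ℓ) (h2 : OnLine y ℓ) (h3 : OnLine x ℓ') (h4 : OnLine y ℓ') : ℓ = ℓ' := by
  obtain ⟨c, hc⟩ := forms_eq hxy ℓ.rep_nonzero ℓ'.rep_nonzero h1 h2 h3 h4
  rw [← ℓ.mk_rep, ← ℓ'.mk_rep]
  rw [Projectivization.mk_eq_mk_iff]
  exact ⟨c, hc.symm⟩

/-- if a nonzero form vanishes on two distinct points and `Collinear3 x y w`, it vanishes on w -/
lemma coll_extend {x y w : Pt K} (hxy : x ≠ y) {f : Form K}
    (hf : f ≠ 0) (hfx : f x.rep = 0) (hfy : f y.rep = 0)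
    (h : Collinear3 x y w) : f w.rep = 0 := by
  obtain ⟨g, hg, hgx, hgy, hgw⟩ := h
  exact vanish_of_two hxy hg hgx hgy hfx hfy hgw

noncomputable def cmul (c : Fin 3 → K) : Form K :=
  ∑ i, c i • (LinearMap.proj i : (Fin 3 → K) →ₗ[K] K)

lemma cmul_apply (c v : Fin 3 → K) : cmul c v = ∑ i, c i * v i := by
  simp [cmul]

noncomputable def coeffs (f : Form K) : Fin 3 → K := fun i => f (Pi.single i 1)

lemma eval_coeffs (f : Form K) (v : Fin 3 → K) : f v = ∑ i, v i * coeffs f i := by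
  rw [LinearMap.pi_apply_eq_sum_univ f v]
  refine Finset.sum_congr rfl fun i _ => ?_
  rw [smul_eq_mul]
  congr 1
  unfold coeffs
  congr 1
  funext j
  by_cases h : i = j <;> simp [Pi.single, Function.update, h, eq_comm]

lemma coeffs_cmul (c : Fin 3 → K) : coeffs (cmul c) = c := by
  funext i
  unfold coeffs
  rw [cmul_apply]
  rw [Finset.sum_eq_single i]
  · simp
  · intro j _ hj
    simp [Pi.single_apply, hj]
  · simp

lemma cmul_eq_zero_iff (c : Fin 3 → K) : cmul c = 0 ↔ c = 0 := by
  constructor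
  · intro h
    have := coeffs_cmul c
    rw [h] at this
    rw [← this]
    funext i
    simp [coeffs]
  · rintro rfl
    apply LinearMap.ext
    intro v
    simp [cmul_apply]

lemma cmul_coeffs (f : Form K) : cmul (coeffs f) = f := by
  apply LinearMap.ext
  intro v
  rw [cmul_apply, eval_coeffs f v]
  exact Finset.sum_congr rfl fun i _ => mul_comm _ _

section Semilinear

variable (σ : K →+* K)

noncomputable def pmap (x : Pt K) : Pt K :=
  Projectivization.mk K (fun i => σ (x.rep i)) (by
    intro h
    apply x.rep_nonzero
    funext i
    have := congrFun h i
    simpa using this)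

lemma smul_fun_comp (c : K) (v : Fin 3 → K) :
    (fun i => σ ((c • v) i)) = σ c • (fun i => σ (v i)) := by
  funext i
  simp [mul_comm]

lemma pmap_mk (v : Fin 3 → K) (hv : v ≠ 0) (hv' : (fun i => σ (v i)) ≠ 0) :
    pmap σ (Projectivization.mk K v hv) = Projectivization.mk K (fun i => σ (v i)) hv' := by
  obtain ⟨c, hc⟩ := rep_eq_unit_smul (K := K) v hv
  unfold pmap
  have h1 : (fun i => σ ((Projectivization.mk K v hv).rep i)) = σ (c : K) • (fun i => σ (v i)) := by
    rw [hc]; exact smul_fun_comp σ (c : K) v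
  simp_rw [h1]
  rw [Projectivization.mk_eq_mk_iff]
  refine ⟨Units.mk0 (σ (c : K)) (by simp), rfl⟩

lemma pmap_rep (x : Pt K) : ∃ c : Kˣ, (pmap σ x).rep = (c : K) • (fun i => σ (x.rep i)) := by
  unfold pmap
  obtain ⟨c, hc⟩ := rep_eq_unit_smul (K := K) (fun i => σ (x.rep i))
    (by intro h; exact x.rep_nonzero (funext fun i => by simpa using congrFun h i))
  exact ⟨c, hc⟩

noncomputable def mapForm (f : Form K) : Form K := cmul (fun i => σ (coeffs f i))

lemma mapForm_apply (f : Form K) (v : Fin 3 → K) :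
    mapForm σ f (fun i => σ (v i)) = σ (f v) := by
  unfold mapForm
  rw [cmul_apply, eval_coeffs f v, map_sum]
  refine Finset.sum_congr rfl fun i _ => by rw [map_mul, mul_comm]

lemma mapForm_ne_zero {f : Form K} (hf : f ≠ 0) : mapForm σ f ≠ 0 := by
  unfold mapForm
  rw [Ne, cmul_eq_zero_iff]
  intro h
  apply hf
  have hc : coeffs f = 0 := by
    funext i
    have := congrFun h i
    simp only [Pi.zero_apply] at this ⊢
    exact σ.injective (by simpa using this)
  rw [← cmul_coeffs f, hc, cmul_eq_zero_iff]

lemma mapForm_vanish {f : Form K} {x : Pt K} (h : f x.rep = 0) :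
    mapForm σ f (pmap σ x).rep = 0 := by
  obtain ⟨c, hc⟩ := pmap_rep σ x
  rw [hc, map_smul, smul_eq_mul, mapForm_apply, h, map_zero, mul_zero]

lemma coll_pmap {x y z : Pt K} (h : Collinear3 x y z) :
    Collinear3 (pmap σ x) (pmap σ y) (pmap σ z) := by
  obtain ⟨f, hf, hx, hy, hz⟩ := h
  exact ⟨mapForm σ f, mapForm_ne_zero σ hf, mapForm_vanish σ hx,
    mapForm_vanish σ hy, mapForm_vanish σ hz⟩

end Semilinear

lemma coll_perm1 {x y z : Pt K} (h : Collinear3 x y z) : Collinear3 x z y := by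
  obtain ⟨f, h0, h1, h2, h3⟩ := h; exact ⟨f, h0, h1, h3, h2⟩

lemma coll_perm2 {x y z : Pt K} (h : Collinear3 x y z) : Collinear3 y x z := by
  obtain ⟨f, h0, h1, h2, h3⟩ := h; exact ⟨f, h0, h2, h1, h3⟩

lemma coll_perm3 {x y z : Pt K} (h : Collinear3 x y z) : Collinear3 z x y := by
  obtain ⟨f, h0, h1, h2, h3⟩ := h; exact ⟨f, h0, h3, h1, h2⟩

section Orbit

variable (σ : K →+* K) (a : Pt K)

noncomputable def orb (i : ℕ) : Pt K := (pmap σ)^[i] a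

variable {σ a}

lemma orb_succ (i : ℕ) : orb σ a (i + 1) = pmap σ (orb σ a i) :=
  Function.iterate_succ_apply' _ _ _

variable (h7 : orb σ a 7 = a) (horb : ∀ i, 0 < i → i < 7 → orb σ a i ≠ a)

include h7

lemma orb_add7 (i : ℕ) : orb σ a (i + 7) = orb σ a i := by
  unfold orb at h7 ⊢
  rw [Function.iterate_add_apply, h7]

lemma orb_mod (i : ℕ) : orb σ a i = orb σ a (i % 7) := by
  induction i using Nat.strong_induction_on with
  | _ i ih =>
    by_cases h : i < 7
    · rw [Nat.mod_eq_of_lt h]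
    · have hi : i = (i - 7) + 7 := by omega
      rw [hi, orb_add7 h7, ih (i - 7) (by omega)]
      congr 1
      omega

include horb

lemma orb_ne_lt {i j : ℕ} (hj : j < 7) (hij : i < j) : orb σ a i ≠ orb σ a j := by
  intro h
  have h2 : orb σ a (7 - j + i) = a := by
    have h3 : (pmap σ)^[7 - j] (orb σ a i) = (pmap σ)^[7 - j] (orb σ a j) := by rw [h]
    unfold orb at h3 h7 ⊢
    rw [← Function.iterate_add_apply, ← Function.iterate_add_apply,
      show 7 - j + j = 7 from by omega, h7] at h3
    exact h3
  exact horb _ (by omega) (by omega) h2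

lemma orb_ne {i j : ℕ} (hij : i % 7 ≠ j % 7) : orb σ a i ≠ orb σ a j := by
  rw [orb_mod h7 i, orb_mod h7 j]
  rcases Nat.lt_or_ge (i % 7) (j % 7) with h | h
  · exact orb_ne_lt h7 horb (Nat.mod_lt _ (by omega)) h
  · have h' : j % 7 < i % 7 := by omega
    exact (orb_ne_lt h7 horb (Nat.mod_lt _ (by omega)) h').symm

omit h7 horb

lemma coll_shift {i j l : ℕ} (h : Collinear3 (orb σ a i) (orb σ a j) (orb σ a l)) (m : ℕ) :
    Collinear3 (orb σ a (i + m)) (orb σ a (j + m)) (orb σ a (l + m)) := by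
  induction m with
  | zero => simpa using h
  | succ m ih =>
    rw [show i + (m + 1) = (i + m) + 1 from rfl, show j + (m + 1) = (j + m) + 1 from rfl,
      show l + (m + 1) = (l + m) + 1 from rfl, orb_succ, orb_succ, orb_succ]
    exact coll_pmap σ ih

include h7

lemma coll_shift' {i j l : ℕ} (h : Collinear3 (orb σ a i) (orb σ a j) (orb σ a l)) (m : ℕ) :
    Collinear3 (orb σ a ((i + m) % 7)) (orb σ a ((j + m) % 7)) (orb σ a ((l + m) % 7)) := by
  have := coll_shift h m
  rwa [orb_mod h7 (i + m), orb_mod h7 (j + m), orb_mod h7 (l + m)] at this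

include horb

/-- the main claim, case {0,1,3}. -/
lemma claimA (hA : Collinear3 (orb σ a 0) (orb σ a 1) (orb σ a 3))
    (hB : ¬ Collinear3 (orb σ a 0) (orb σ a 1) (orb σ a 5)) :
    ∀ m < 7, Collinear3 (orb σ a 0) (orb σ a 1) (orb σ a m) → m = 0 ∨ m = 1 ∨ m = 3 := by
  have collT : ∀ i : ℕ, Collinear3 (orb σ a (i % 7)) (orb σ a ((i + 1) % 7))
      (orb σ a ((i + 3) % 7)) := by
    intro i
    have := coll_shift' h7 hA i
    rwa [show 0 + i = i from by omega, show 1 + i = i + 1 from by omega,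
      show 3 + i = i + 3 from by omega] at this
  intro m hm hc
  interval_cases m
  · tauto
  · tauto
  · -- m = 2 : f vanishes 0,1,2; extend to 4 via (1,2,4); to 5 via (4,5,0)
    exfalso
    obtain ⟨f, hf, h0, h1, h2⟩ := hc
    have c14 := collT 1  -- (1,2,4)
    norm_num at c14
    have h4 : f (orb σ a 4).rep = 0 :=
      coll_extend (orb_ne h7 horb (by norm_num)) hf h1 h2 c14
    have c45 := collT 4  -- (4,5,0)
    norm_num at c45
    have h5 : f (orb σ a 5).rep = 0 :=
      coll_extend (orb_ne h7 horb (by norm_num)) hf h4 h0 (coll_perm1 c45)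
    exact hB ⟨f, hf, h0, h1, h5⟩
  · tauto
  · -- m = 4 : f vanishes 0,1,4; (4,5,0) gives 5
    exfalso
    obtain ⟨f, hf, h0, h1, h4⟩ := hc
    have c45 := collT 4
    norm_num at c45
    have h5 : f (orb σ a 5).rep = 0 :=
      coll_extend (orb_ne h7 horb (by norm_num)) hf h4 h0 (coll_perm1 c45)
    exact hB ⟨f, hf, h0, h1, h5⟩
  · exact absurd hc hB
  · -- m = 6 : f vanishes 0,1,6; (5,6,1) reorder (6,1,5) gives 5
    exfalso
    obtain ⟨f, hf, h0, h1, h6⟩ := hc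
    have c56 := collT 5  -- (5,6,1)
    norm_num at c56
    have h5 : f (orb σ a 5).rep = 0 :=
      coll_extend (orb_ne h7 horb (by norm_num)) hf h6 h1 (coll_perm3 (coll_perm3 c56))
    exact hB ⟨f, hf, h0, h1, h5⟩

/-- the main claim, case {0,1,5}. -/
lemma claimB (hA : Collinear3 (orb σ a 0) (orb σ a 1) (orb σ a 5))
    (hB : ¬ Collinear3 (orb σ a 0) (orb σ a 1) (orb σ a 3)) :
    ∀ m < 7, Collinear3 (orb σ a 0) (orb σ a 1) (orb σ a m) → m = 0 ∨ m = 1 ∨ m = 5 := by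
  have collT : ∀ i : ℕ, Collinear3 (orb σ a (i % 7)) (orb σ a ((i + 1) % 7))
      (orb σ a ((i + 5) % 7)) := by
    intro i
    have := coll_shift' h7 hA i
    rwa [show 0 + i = i from by omega, show 1 + i = i + 1 from by omega,
      show 5 + i = i + 5 from by omega] at this
  intro m hm hc
  interval_cases m
  · tauto
  · tauto
  · -- m = 2 : f vanishes 0,1,2; (2,3,0) reorder (2,0,3) gives 3
    exfalso
    obtain ⟨f, hf, h0, h1, h2⟩ := hc
    have c23 := collT 2  -- (2,3,0)
    norm_num at c23
    have h3 : f (orb σ a 3).rep = 0 :=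
      coll_extend (orb_ne h7 horb (by norm_num)) hf h2 h0 (coll_perm1 c23)
    exact hB ⟨f, hf, h0, h1, h3⟩
  · exact absurd hc hB
  · -- m = 4 : f vanishes 0,1,4; (3,4,1) reorder (4,1,3) gives 3
    exfalso
    obtain ⟨f, hf, h0, h1, h4⟩ := hc
    have c34 := collT 3  -- (3,4,1)
    norm_num at c34
    have h3 : f (orb σ a 3).rep = 0 :=
      coll_extend (orb_ne h7 horb (by norm_num)) hf h4 h1 (coll_perm3 (coll_perm3 c34))
    exact hB ⟨f, hf, h0, h1, h3⟩
  · tauto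
  · -- m = 6 : f vanishes 0,1,6; (6,0,4) gives 4; then (4,1,3) gives 3
    exfalso
    obtain ⟨f, hf, h0, h1, h6⟩ := hc
    have c60 := collT 6  -- (6,0,4)
    norm_num at c60
    have h4 : f (orb σ a 4).rep = 0 :=
      coll_extend (orb_ne h7 horb (by norm_num)) hf h6 h0 c60
    have c34 := collT 3  -- (3,4,1)
    norm_num at c34
    have h3 : f (orb σ a 3).rep = 0 :=
      coll_extend (orb_ne h7 horb (by norm_num)) hf h4 h1 (coll_perm3 (coll_perm3 c34))
    exact hB ⟨f, hf, h0, h1, h3⟩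

end Orbit

section Construction

variable {σ : K →+* K} {a : Pt K}

lemma ncard_image_3 {α β : Type} (g : α → β) {s : Set α} (hinj : Set.InjOn g s)
    {x y z : α} (hx : x ∈ s) (hy : y ∈ s) (hz : z ∈ s)
    (hxy : x ≠ y) (hxz : x ≠ z) (hyz : y ≠ z) :
    (g '' ({x, y, z} : Set α)).ncard = 3 := by
  rw [Set.ncard_image_of_injOn (fun u hu v hv huv => hinj
    (by rcases hu with rfl | rfl | rfl <;> assumption)
    (by rcases hv with rfl | rfl | rfl <;> assumption) huv)]
  exact Set.ncard_eq_three.mpr ⟨x, y, z, hxy, hxz, hyz, rfl⟩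

lemma fano_of (h7 : orb σ a 7 = a) (horb : ∀ i, 0 < i → i < 7 → orb σ a i ≠ a)
    {k : ℕ} (hk : k = 3 ∨ k = 5)
    (hA : Collinear3 (orb σ a 0) (orb σ a 1) (orb σ a k))
    (hclaim : ∀ m < 7, Collinear3 (orb σ a 0) (orb σ a 1) (orb σ a m) →
      m = 0 ∨ m = 1 ∨ m = k) :
    IsFanoPlane {x | ∃ i < 7, x = orb σ a i} := by
  classical
  obtain ⟨f0, hf0, e0, e1, ek⟩ := hA
  set fs : ℕ → Form K := fun j => (mapForm σ)^[j] f0 with hfs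
  have fs_succ : ∀ j, fs (j + 1) = mapForm σ (fs j) := fun j =>
    Function.iterate_succ_apply' _ _ _
  have hfs_ne : ∀ j, fs j ≠ 0 := by
    intro j
    induction j with
    | zero => exact hf0
    | succ j ih => rw [fs_succ]; exact mapForm_ne_zero σ ih
  have hvan : ∀ j, fs j (orb σ a j).rep = 0 ∧ fs j (orb σ a (j + 1)).rep = 0 ∧
      fs j (orb σ a (j + k)).rep = 0 := by
    intro j
    induction j with
    | zero => exact ⟨e0, e1, by rw [Nat.zero_add]; exact ek⟩
    | succ j ih =>
      refine ⟨?_, ?_, ?_⟩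
      · rw [fs_succ, orb_succ]; exact mapForm_vanish σ ih.1
      · rw [fs_succ, show j + 1 + 1 = (j + 1) + 1 from rfl, orb_succ]
        exact mapForm_vanish σ ih.2.1
      · rw [fs_succ, show j + 1 + k = (j + k) + 1 from by omega, orb_succ]
        exact mapForm_vanish σ ih.2.2
  set ln : ℕ → Ln K := fun j => Projectivization.mk K (fs j) (hfs_ne j) with hln
  have honline : ∀ (x : Pt K) (j : ℕ), OnLine x (ln j) ↔ fs j x.rep = 0 := by
    intro x j
    exact onLine_mk x (fs j) (hfs_ne j)
  -- the key incidence computation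
  have hkey : ∀ m < 7, ∀ j < 7, (OnLine (orb σ a m) (ln j) ↔
      (m = j ∨ m = (j + 1) % 7 ∨ m = (j + k) % 7)) := by
    intro m hm j hj
    constructor
    · intro h
      have hcoll : Collinear3 (orb σ a j) (orb σ a (j + 1)) (orb σ a m) :=
        ⟨fs j, hfs_ne j, (hvan j).1, (hvan j).2.1, (honline _ j).mp h⟩
      have hc2 := coll_shift' h7 hcoll (14 - j)
      rw [show (j + (14 - j)) % 7 = 0 from by omega,
        show (j + 1 + (14 - j)) % 7 = 1 from by omega] at hc2
      have := hclaim _ (Nat.mod_lt _ (by omega)) hc2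
      rcases hk with rfl | rfl <;> omega
    · intro h
      rw [honline]
      rcases h with rfl | rfl | rfl
      · exact (hvan m).1
      · rw [← orb_mod h7]; exact (hvan j).2.1
      · rw [← orb_mod h7]; exact (hvan j).2.2
  have hinj : Set.InjOn (orb σ a) (Set.Iio 7) := by
    intro i hi j hj hij
    by_contra hne
    exact orb_ne h7 horb (by simp only [Set.mem_Iio] at hi hj; omega) hij
  have hlninj : Set.InjOn ln (Set.Iio 7) := by
    intro i hi j hj hij
    simp only [Set.mem_Iio] at hi hj
    have o1 : OnLine (orb σ a i) (ln j) := by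
      rw [← hij]; exact (hkey i hi i hi).mpr (Or.inl rfl)
    have o2 : OnLine (orb σ a ((i + 1) % 7)) (ln j) := by
      rw [← hij]; exact (hkey _ (Nat.mod_lt _ (by omega)) i hi).mpr (Or.inr (Or.inl rfl))
    have c1 := (hkey i hi j hj).mp o1
    have c2 := (hkey _ (Nat.mod_lt _ (by omega)) j hj).mp o2
    rcases hk with rfl | rfl <;> omega
  have hSim : {x | ∃ i < 7, x = orb σ a i} = orb σ a '' Set.Iio 7 := by
    ext x
    simp only [Set.mem_setOf_eq, Set.mem_image, Set.mem_Iio]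
    constructor
    · rintro ⟨i, hi, rfl⟩; exact ⟨i, hi, rfl⟩
    · rintro ⟨i, hi, rfl⟩; exact ⟨i, hi, rfl⟩
  have hIio7 : (Set.Iio 7 : Set ℕ).ncard = 7 := by
    rw [← Finset.coe_range, Set.ncard_coe_finset, Finset.card_range]
  refine ⟨?_, ln '' Set.Iio 7, ?_, ?_, ?_⟩
  · rw [hSim, Set.ncard_image_of_injOn hinj, hIio7]
  · rw [Set.ncard_image_of_injOn hlninj, hIio7]
  · -- each line contains exactly 3 orbit points
    rintro ℓ ⟨j, hj, rfl⟩
    simp only [Set.mem_Iio] at hj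
    have hset : {x ∈ {x | ∃ i < 7, x = orb σ a i} | OnLine x (ln j)} =
        orb σ a '' ({j, (j + 1) % 7, (j + k) % 7} : Set ℕ) := by
      ext x
      simp only [Set.mem_setOf_eq, Set.mem_image, Set.mem_insert_iff, Set.mem_singleton_iff]
      constructor
      · rintro ⟨⟨m, hm, rfl⟩, hon⟩
        exact ⟨m, (hkey m hm j hj).mp hon, rfl⟩
      · rintro ⟨m, hmem, rfl⟩
        have hm : m < 7 := by rcases hmem with rfl | rfl | rfl <;> omega
        exact ⟨⟨m, hm, rfl⟩, (hkey m hm j hj).mpr hmem⟩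
    rw [hset]
    exact ncard_image_3 _ hinj (by simp; omega) (by simp; omega) (by simp; omega)
      (by rcases hk with rfl | rfl <;> omega) (by rcases hk with rfl | rfl <;> omega)
      (by rcases hk with rfl | rfl <;> omega)
  · -- each orbit point lies on exactly 3 lines
    rintro x ⟨m, hm, rfl⟩
    have hset : {ℓ ∈ ln '' Set.Iio 7 | OnLine (orb σ a m) ℓ} =
        ln '' ({m, (m + 6) % 7, (m + 7 - k) % 7} : Set ℕ) := by
      ext ℓ
      simp only [Set.mem_setOf_eq, Set.mem_image, Set.mem_Iio, Set.mem_insert_iff,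
        Set.mem_singleton_iff]
      constructor
      · rintro ⟨⟨j, hj, rfl⟩, hon⟩
        have := (hkey m hm j hj).mp hon
        exact ⟨j, by rcases hk with rfl | rfl <;> omega, rfl⟩
      · rintro ⟨j, hmem, rfl⟩
        have hj : j < 7 := by rcases hmem with rfl | rfl | rfl <;> omega
        refine ⟨⟨j, hj, rfl⟩, (hkey m hm j hj).mpr ?_⟩
        rcases hk with rfl | rfl <;> omega
    rw [hset]
    exact ncard_image_3 _ hlninj (by simp; omega) (by simp; omega) (by simp; omega)
      (by rcases hk with rfl | rfl <;> omega) (by rcases hk with rfl | rfl <;> omega)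
      (by rcases hk with rfl | rfl <;> omega)

end Construction

section Forward

variable {σ : K →+* K} {a : Pt K}

lemma orb_zero : orb σ a 0 = a := rfl

lemma forward_of_fano (h7 : orb σ a 7 = a) (horb : ∀ i, 0 < i → i < 7 → orb σ a i ≠ a)
    (hF : IsFanoPlane {x | ∃ i < 7, x = orb σ a i}) :
    (Collinear3 (orb σ a 0) (orb σ a 1) (orb σ a 3) ∨
      Collinear3 (orb σ a 0) (orb σ a 1) (orb σ a 5)) ∧
    ¬ (Collinear3 (orb σ a 0) (orb σ a 1) (orb σ a 3) ∧
      Collinear3 (orb σ a 0) (orb σ a 1) (orb σ a 5)) := by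
  classical
  obtain ⟨hS7, L, hL7, hline, hpoint⟩ := hF
  set S : Set (Pt K) := {x | ∃ i < 7, x = orb σ a i} with hSdef
  have hSfin : S.Finite := by
    apply Set.Finite.subset ((Set.finite_Iio (7 : ℕ)).image (orb σ a))
    rintro x ⟨i, hi, rfl⟩
    exact ⟨i, hi, rfl⟩
  have haS : a ∈ S := ⟨0, by omega, rfl⟩
  have hmemS : ∀ i, i < 7 → orb σ a i ∈ S := fun i hi => ⟨i, hi, rfl⟩
  have hne01 : (orb σ a 0 : Pt K) ≠ orb σ a 1 := orb_ne h7 horb (by omega)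
  -- the three lines through a
  have h3 := hpoint a haS
  obtain ⟨ℓ1, ℓ2, ℓ3, h12, h13, h23, hLa⟩ := Set.ncard_eq_three.mp h3
  have hmem : ∀ ℓ ∈ ({ℓ1, ℓ2, ℓ3} : Set (Ln K)), ℓ ∈ L ∧ OnLine a ℓ := by
    intro ℓ hℓ
    have : ℓ ∈ {ℓ ∈ L | OnLine a ℓ} := by rw [hLa]; exact hℓ
    exact this
  -- core: a line through a and orb 1 gives the dichotomy
  have hcore : ∀ ℓ : Ln K, ℓ ∈ L → OnLine a ℓ → OnLine (orb σ a 1) ℓ →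
      Collinear3 (orb σ a 0) (orb σ a 1) (orb σ a 3) ∨
      Collinear3 (orb σ a 0) (orb σ a 1) (orb σ a 5) := by
    intro ℓ hℓL hℓa hℓ1
    have hT3 := hline ℓ hℓL
    obtain ⟨x, y, z, hxy, hxz, hyz, hTxyz⟩ := Set.ncard_eq_three.mp hT3
    have haT : a ∈ ({x, y, z} : Set (Pt K)) := by rw [← hTxyz]; exact ⟨haS, hℓa⟩
    have hbT : orb σ a 1 ∈ ({x, y, z} : Set (Pt K)) := by
      rw [← hTxyz]; exact ⟨hmemS 1 (by omega), hℓ1⟩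
    have hab : a ≠ orb σ a 1 := hne01
    have hthird : ∃ c, c ∈ ({x, y, z} : Set (Pt K)) ∧ c ≠ a ∧ c ≠ orb σ a 1 := by
      simp only [Set.mem_insert_iff, Set.mem_singleton_iff] at haT hbT ⊢
      rcases haT with ha | ha | ha <;> rcases hbT with hb | hb | hb
      · exact absurd (hb.trans ha.symm).symm hab
      · exact ⟨z, Or.inr (Or.inr rfl), fun h => hxz (ha.symm.trans h.symm),
          fun h => hyz (hb.symm.trans h.symm)⟩
      · exact ⟨y, Or.inr (Or.inl rfl), fun h => hxy (ha.symm.trans h.symm),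
          fun h => hyz (h.trans hb)⟩
      · exact ⟨z, Or.inr (Or.inr rfl), fun h => hyz (ha.symm.trans h.symm),
          fun h => hxz (hb.symm.trans h.symm)⟩
      · exact absurd (hb.trans ha.symm).symm hab
      · exact ⟨x, Or.inl rfl, fun h => hxy (h.trans ha), fun h => hxz (h.trans hb)⟩
      · exact ⟨y, Or.inr (Or.inl rfl), fun h => hyz (h.trans ha),
          fun h => hxy (hb.symm.trans h.symm)⟩
      · exact ⟨x, Or.inl rfl, fun h => hxz (h.trans ha), fun h => hxy (h.trans hb)⟩
      · exact absurd (hb.trans ha.symm).symm hab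
    obtain ⟨c, hcT, hca, hc1⟩ := hthird
    have hcS : c ∈ S := by
      have : c ∈ {x ∈ S | OnLine x ℓ} := by rw [hTxyz]; exact hcT
      exact this.1
    have hcOn : OnLine c ℓ := by
      have : c ∈ {x ∈ S | OnLine x ℓ} := by rw [hTxyz]; exact hcT
      exact this.2
    obtain ⟨m, hm, rfl⟩ := hcS
    have hm0 : m ≠ 0 := by rintro rfl; exact hca rfl
    have hm1 : m ≠ 1 := by rintro rfl; exact hc1 rfl
    have hcoll : Collinear3 (orb σ a 0) (orb σ a 1) (orb σ a m) :=
      ⟨ℓ.rep, ℓ.rep_nonzero, hℓa, hℓ1, hcOn⟩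
    obtain ⟨f, hf, e0, e1, em⟩ := hcoll
    interval_cases m
    · exact absurd rfl hm0
    · exact absurd rfl hm1
    · -- m = 2 : shift to (1,2,3), extend along (orb1, orb2)
      have hsh := coll_shift' h7 (⟨f, hf, e0, e1, em⟩ :
        Collinear3 (orb σ a 0) (orb σ a 1) (orb σ a 2)) 1
      norm_num at hsh
      have h3' : f (orb σ a 3).rep = 0 :=
        coll_extend (orb_ne h7 horb (by norm_num)) hf e1 em hsh
      exact Or.inl ⟨f, hf, e0, e1, h3'⟩
    · exact Or.inl ⟨f, hf, e0, e1, em⟩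
    · -- m = 4 : shift to (3,4,0), reorder (4,0,3)
      have hsh := coll_shift' h7 (⟨f, hf, e0, e1, em⟩ :
        Collinear3 (orb σ a 0) (orb σ a 1) (orb σ a 4)) 3
      norm_num at hsh
      have h3' : f (orb σ a 3).rep = 0 :=
        coll_extend (orb_ne h7 horb (by norm_num)) hf em e0
          (coll_perm3 (coll_perm3 hsh))
      exact Or.inl ⟨f, hf, e0, e1, h3'⟩
    · exact Or.inr ⟨f, hf, e0, e1, em⟩
    · -- m = 6 : shift to (1,2,0), reorder (0,1,2) to get orb2; then (1,2,3)
      have hsh := coll_shift' h7 (⟨f, hf, e0, e1, em⟩ :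
        Collinear3 (orb σ a 0) (orb σ a 1) (orb σ a 6)) 1
      norm_num at hsh
      have h2' : f (orb σ a 2).rep = 0 :=
        coll_extend (orb_ne h7 horb (by norm_num)) hf e0 e1 (coll_perm3 hsh)
      have hsh2 := coll_shift' h7 (⟨f, hf, e0, e1, h2'⟩ :
        Collinear3 (orb σ a 0) (orb σ a 1) (orb σ a 2)) 1
      norm_num at hsh2
      have h3' : f (orb σ a 3).rep = 0 :=
        coll_extend (orb_ne h7 horb (by norm_num)) hf e1 h2' hsh2
      exact Or.inl ⟨f, hf, e0, e1, h3'⟩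
  -- not both
  have hnand : ¬ (Collinear3 (orb σ a 0) (orb σ a 1) (orb σ a 3) ∧
      Collinear3 (orb σ a 0) (orb σ a 1) (orb σ a 5)) := by
    rintro ⟨⟨f, hf, e0, e1, e3⟩, hc5⟩
    have h5 : f (orb σ a 5).rep = 0 := coll_extend hne01 hf e0 e1 hc5
    have hc013 : Collinear3 (orb σ a 0) (orb σ a 1) (orb σ a 3) := ⟨f, hf, e0, e1, e3⟩
    -- extend f to the whole orbit
    have hsh5 := coll_shift' h7 hc013 5  -- (5, 6, 1)
    norm_num at hsh5
    have h6 : f (orb σ a 6).rep = 0 :=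
      coll_extend (orb_ne h7 horb (by norm_num)) hf h5 e1 (coll_perm1 hsh5)
    have hsh6 := coll_shift' h7 hc013 6  -- (6, 0, 2)
    norm_num at hsh6
    have h2 : f (orb σ a 2).rep = 0 :=
      coll_extend (orb_ne h7 horb (by norm_num)) hf h6 e0 hsh6
    have hsh1 := coll_shift' h7 hc013 1  -- (1, 2, 4)
    norm_num at hsh1
    have h4 : f (orb σ a 4).rep = 0 :=
      coll_extend (orb_ne h7 horb (by norm_num)) hf e1 h2 hsh1
    have hall : ∀ i < 7, f (orb σ a i).rep = 0 := by
      intro i hi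
      interval_cases i <;> assumption
    -- every orbit point is on ℓ1, contradiction with exactly 3
    obtain ⟨hℓ1L, hℓ1a⟩ := hmem ℓ1 (by left; rfl)
    have hT3 := hline ℓ1 hℓ1L
    obtain ⟨x, y, z, hxy, hxz, hyz, hTxyz⟩ := Set.ncard_eq_three.mp hT3
    have hxT : x ∈ {u ∈ S | OnLine u ℓ1} := by rw [hTxyz]; left; rfl
    have hyT : y ∈ {u ∈ S | OnLine u ℓ1} := by rw [hTxyz]; right; left; rfl
    have hfS : ∀ w ∈ S, f w.rep = 0 := by
      rintro w ⟨i, hi, rfl⟩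
      exact hall i hi
    have hST : S ⊆ {u ∈ S | OnLine u ℓ1} := by
      intro w hw
      refine ⟨hw, ?_⟩
      exact vanish_of_two hxy hf (hfS x hxT.1) (hfS y hyT.1) hxT.2 hyT.2 (hfS w hw)
    have hTS : {u ∈ S | OnLine u ℓ1} ⊆ S := fun u hu => hu.1
    have heq : {u ∈ S | OnLine u ℓ1} = S := Set.Subset.antisymm hTS hST
    rw [heq, hS7] at hT3
    omega
  refine ⟨?_, hnand⟩
  -- a and orb 1 lie on a common line among ℓ1, ℓ2, ℓ3
  have hdisj : ∀ ℓ ℓ' : Ln K, ℓ ∈ L → ℓ' ∈ L → ℓ ≠ ℓ' → OnLine a ℓ → OnLine a ℓ' →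
      ∀ w : Pt K, w ≠ a → OnLine w ℓ → OnLine w ℓ' → False := by
    intro ℓ ℓ' _ _ hne ha ha' w hwa hw hw'
    exact hne (line_eq_of_two hwa hw ha hw' ha')
  -- counting : the sets T i \ {a} cover S \ {a}
  have hTfin : ∀ ℓ : Ln K, ({x ∈ S | OnLine x ℓ} : Set (Pt K)).Finite :=
    fun ℓ => hSfin.subset (Set.sep_subset _ _)
  set T : Ln K → Set (Pt K) := fun ℓ => {x ∈ S | OnLine x ℓ} \ {a} with hTdef
  have hTcard : ∀ ℓ ∈ ({ℓ1, ℓ2, ℓ3} : Set (Ln K)), (T ℓ).ncard = 2 := by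
    intro ℓ hℓ
    obtain ⟨hℓL, hℓa⟩ := hmem ℓ hℓ
    rw [hTdef]
    have haT : a ∈ {x ∈ S | OnLine x ℓ} := ⟨haS, hℓa⟩
    rw [Set.ncard_diff_singleton_of_mem haT, hline ℓ hℓL]
  have hTsub : ∀ ℓ, T ℓ ⊆ S \ {a} := by
    rintro ℓ u ⟨⟨huS, _⟩, hua⟩
    exact ⟨huS, hua⟩
  have hdisjT : ∀ ℓ ℓ', ℓ ∈ ({ℓ1, ℓ2, ℓ3} : Set (Ln K)) → ℓ' ∈ ({ℓ1, ℓ2, ℓ3} : Set (Ln K)) →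
      ℓ ≠ ℓ' → Disjoint (T ℓ) (T ℓ') := by
    intro ℓ ℓ' hℓ hℓ' hne
    rw [Set.disjoint_left]
    rintro u ⟨⟨huS, hu⟩, hua⟩ ⟨⟨_, hu'⟩, _⟩
    exact hdisj ℓ ℓ' (hmem ℓ hℓ).1 (hmem ℓ' hℓ').1 hne (hmem ℓ hℓ).2 (hmem ℓ' hℓ').2
      u (by simpa using hua) hu hu'
  set U : Set (Pt K) := T ℓ1 ∪ T ℓ2 ∪ T ℓ3 with hUdef
  have hTifin : ∀ ℓ, (T ℓ).Finite := fun ℓ => (hTfin ℓ).diff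
  have hU6 : U.ncard = 6 := by
    rw [hUdef]
    rw [Set.ncard_union_eq (by
        rw [Set.disjoint_union_left]
        exact ⟨hdisjT ℓ1 ℓ3 (by tauto) (by tauto) h13,
          hdisjT ℓ2 ℓ3 (by tauto) (by tauto) h23⟩)
      ((hTifin ℓ1).union (hTifin ℓ2)) (hTifin ℓ3)]
    rw [Set.ncard_union_eq (hdisjT ℓ1 ℓ2 (by tauto) (by tauto) h12) (hTifin ℓ1) (hTifin ℓ2)]
    rw [hTcard ℓ1 (by tauto), hTcard ℓ2 (by tauto), hTcard ℓ3 (by tauto)]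
  have hUsub : U ⊆ S \ {a} := by
    rw [hUdef]
    intro u hu
    rcases hu with (hu | hu) | hu <;> exact hTsub _ hu
  have hSd6 : (S \ {a}).ncard = 6 := by
    rw [Set.ncard_diff_singleton_of_mem haS, hS7]
  have hUeq : U = S \ {a} := by
    apply Set.eq_of_subset_of_ncard_le hUsub _ hSfin.diff
    rw [hU6, hSd6]
  have hb1 : orb σ a 1 ∈ S \ {a} := ⟨hmemS 1 (by omega), by
    simp only [Set.mem_singleton_iff]
    exact horb 1 (by omega) (by omega)⟩
  rw [← hUeq, hUdef] at hb1
  rcases hb1 with (hb | hb) | hb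
  · obtain ⟨⟨_, hOn⟩, _⟩ := hb
    exact hcore ℓ1 (hmem ℓ1 (by tauto)).1 (hmem ℓ1 (by tauto)).2 hOn
  · obtain ⟨⟨_, hOn⟩, _⟩ := hb
    exact hcore ℓ2 (hmem ℓ2 (by tauto)).1 (hmem ℓ2 (by tauto)).2 hOn
  · obtain ⟨⟨_, hOn⟩, _⟩ := hb
    exact hcore ℓ3 (hmem ℓ3 (by tauto)).1 (hmem ℓ3 (by tauto)).2 hOn

end Forward

end FanoAux

open FanoAux in
theorem stmt_11 (n : ℕ) (hn : n ≠ 0) (a : Pt (Kbar 2 n))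
    (h7 : (Frob (2 ^ n))^[7] a = a)
    (horb : ∀ i, 0 < i → i < 7 → (Frob (2 ^ n))^[i] a ≠ a) :
    IsFanoPlane {x | ∃ i < 7, x = (Frob (2 ^ n))^[i] a} ↔
      Xor' (Collinear3 a (Frob (2 ^ n) a) ((Frob (2 ^ n))^[5] a))
           (Collinear3 a (Frob (2 ^ n) a) ((Frob (2 ^ n))^[3] a)) := by
  set K := Kbar 2 n
  set σ : K →+* K := iterateFrobenius K 2 n with hσ
  have hq : (2 : ℕ) ^ n ≠ 0 := by positivity
  have hfe : (Frob (2 ^ n) : Pt K → Pt K) = pmap σ := by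
    funext x
    unfold Frob
    rw [dif_neg hq]
    have hfun : (fun i => x.rep i ^ 2 ^ n) = fun i => σ (x.rep i) := by
      funext i
      rw [hσ, iterateFrobenius_def 2 n (x.rep i)]
    unfold pmap
    rw [Projectivization.mk_eq_mk_iff]
    exact ⟨1, by rw [one_smul, hfun]⟩
  rw [hfe] at h7 horb ⊢
  have h7' : orb σ a 7 = a := h7
  have horb' : ∀ i, 0 < i → i < 7 → orb σ a i ≠ a := horb
  have e0 : orb σ a 0 = a := rfl
  have e1 : orb σ a 1 = pmap σ a := rfl
  have e3 : orb σ a 3 = (pmap σ)^[3] a := rfl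
  have e5 : orb σ a 5 = (pmap σ)^[5] a := rfl
  constructor
  · intro hF
    have h := forward_of_fano h7' horb' hF
    rw [e0, e1, e3, e5] at h
    rcases h.1 with h3 | h5
    · exact Or.inr ⟨h3, fun h5 => h.2 ⟨h3, h5⟩⟩
    · exact Or.inl ⟨h5, fun h3 => h.2 ⟨h3, h5⟩⟩
  · rintro (⟨h5, h3n⟩ | ⟨h3, h5n⟩)
    · have h5' : Collinear3 (orb σ a 0) (orb σ a 1) (orb σ a 5) := h5
      have h3n' : ¬ Collinear3 (orb σ a 0) (orb σ a 1) (orb σ a 3) := h3n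
      exact fano_of h7' horb' (Or.inr rfl) h5' (claimB h7' horb' h5' h3n')
    · have h3' : Collinear3 (orb σ a 0) (orb σ a 1) (orb σ a 3) := h3
      have h5n' : ¬ Collinear3 (orb σ a 0) (orb σ a 1) (orb σ a 5) := h5n
      exact fano_of h7' horb' (Or.inl rfl) h3' (claimA h7' horb' h3' h5n')
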